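/- For Ω ∈ (−1, 0) define ω^±(Ω) := πΩ/2 ± arccos(−(Ω+1)·sin(πΩ/2)). Then both functions ω^+ and ω^− are strictly increasing and differentiable on (−1, 0) with strictly positive bounded derivative, ω^+ maps (−1, 0) onto (0, π/2) with boundary limits ω^+(−1⁺) = 0 and ω^+(0⁻) = π/2, and ω^− maps (−1, 0) onto (−π, −π/2) with boundary limits ω^−(−1⁺) = −π and ω^−(0⁻) = −π/2. -/

import Mathlib

open Real

private lemma inner_hasDerivAt (Ω : ℝ) :
    HasDerivAt (fun x : ℝ => -(x+1) * Real.sin (π*x/2))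
      (-Real.sin (π*Ω/2) - (Ω+1) * (π/2) * Real.cos (π*Ω/2)) Ω := by
  have h1 : HasDerivAt (fun x : ℝ => π*x/2) (π/2) Ω := by
    simpa using ((hasDerivAt_id Ω).const_mul π).div_const 2
  have h2 : HasDerivAt (fun x : ℝ => Real.sin (π*x/2)) (Real.cos (π*Ω/2) * (π/2)) Ω := by
    have := (Real.hasDerivAt_sin (π*Ω/2)).comp Ω h1; exact this
  have h3 : HasDerivAt (fun x : ℝ => -(x+1)) (-1) Ω := by
    exact ((hasDerivAt_id Ω).add_const 1).neg
  have h4 : HasDerivAt (fun x : ℝ => -(x+1) * Real.sin (π*x/2))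
      (-1 * Real.sin (π*Ω/2) + -(Ω+1) * (Real.cos (π*Ω/2) * (π/2))) Ω := h3.mul h2
  convert h4 using 1
  ring

private lemma key_ineq {Ω : ℝ} (h1 : -1 < Ω) (h2 : Ω < 0) :
    (-Real.sin (π*Ω/2) - (Ω+1) * (π/2) * Real.cos (π*Ω/2))^2
      < (π/2)^2 * (1 - (-(Ω+1) * Real.sin (π*Ω/2))^2) := by
  have hπ := Real.pi_pos
  set s := Real.sin (π*Ω/2) with hs
  set c := Real.cos (π*Ω/2) with hc
  have hθ1 : -(π/2) < π*Ω/2 := by nlinarith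
  have hθ2 : π*Ω/2 < 0 := by nlinarith
  have hs_neg : s < 0 := Real.sin_neg_of_neg_of_neg_pi_lt hθ2 (by linarith)
  have hs_gt : π*Ω/2 < s := by
    have := Real.sin_lt (x := -(π*Ω/2)) (by linarith)
    rw [Real.sin_neg] at this
    linarith
  have hsq : s^2 < (π*Ω/2)^2 := by
    have := sq_lt_sq' (a := s) (b := -(π*Ω/2)) (by linarith) (by linarith)
    simpa using this
  have hc_pos : 0 < c := Real.cos_pos_of_mem_Ioo ⟨by linarith, by linarith⟩
  have hc2 : c^2 = 1 - s^2 := by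
    have := Real.sin_sq_add_cos_sq (π*Ω/2)
    rw [← hs, ← hc] at this
    linarith
  have hmix : 0 < (Ω+1) * π * c * (-s) :=
    mul_pos (mul_pos (mul_pos (by linarith) hπ) hc_pos) (by linarith)
  have hlast : 0 < (-(π*Ω/2)) * (2*(π*Ω/2) + π) :=
    mul_pos (by linarith) (by linarith)
  nlinarith [hsq, hmix, hlast, hc2, sq_nonneg ((Ω+1)*(π/2))]

private lemma master {Ω : ℝ} (hΩ : Ω ∈ Set.Ioo (-1 : ℝ) 0) :
    ∃ t : ℝ, |t| < π/2 ∧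
      HasDerivAt (fun x : ℝ => π*x/2 + Real.arccos (-(x+1) * Real.sin (π*x/2))) (π/2 + t) Ω ∧
      HasDerivAt (fun x : ℝ => π*x/2 - Real.arccos (-(x+1) * Real.sin (π*x/2))) (π/2 - t) Ω := by
  obtain ⟨h1, h2⟩ := hΩ
  have hπ := Real.pi_pos
  set g := -(Ω+1) * Real.sin (π*Ω/2) with hg
  set g' := -Real.sin (π*Ω/2) - (Ω+1) * (π/2) * Real.cos (π*Ω/2) with hg'
  have hkey : g'^2 < (π/2)^2 * (1 - g^2) := key_ineq h1 h2
  have hq : 0 < 1 - g^2 := by nlinarith [sq_nonneg g']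
  have hne1 : g ≠ -1 := by nlinarith
  have hne2 : g ≠ 1 := by nlinarith
  set r := Real.sqrt (1 - g^2) with hr
  have hr_pos : 0 < r := Real.sqrt_pos.mpr hq
  have hr2 : r^2 = 1 - g^2 := Real.sq_sqrt hq.le
  have habs : |g'| < π/2 * r := by
    apply abs_lt_of_sq_lt_sq ?_ (by positivity)
    calc g'^2 < (π/2)^2 * (1 - g^2) := hkey
      _ = (π/2*r)^2 := by rw [mul_pow (π/2) r, hr2]
  refine ⟨-(1/r) * g', ?_, ?_, ?_⟩
  · rw [abs_mul, abs_neg, abs_of_pos (by positivity : (0:ℝ) < 1/r),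
      div_mul_eq_mul_div, one_mul, div_lt_iff₀ hr_pos]
    exact habs
  · have hlin : HasDerivAt (fun x : ℝ => π*x/2) (π/2) Ω := by
      simpa using ((hasDerivAt_id Ω).const_mul π).div_const 2
    have hA : HasDerivAt (fun x : ℝ => Real.arccos (-(x+1) * Real.sin (π*x/2)))
        (-(1 / Real.sqrt (1 - g^2)) * g') Ω := by
      have := (Real.hasDerivAt_arccos hne1 hne2).comp Ω (inner_hasDerivAt Ω); exact this
    exact hlin.add hA
  · have hlin : HasDerivAt (fun x : ℝ => π*x/2) (π/2) Ω := by
      simpa using ((hasDerivAt_id Ω).const_mul π).div_const 2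
    have hA : HasDerivAt (fun x : ℝ => Real.arccos (-(x+1) * Real.sin (π*x/2)))
        (-(1 / Real.sqrt (1 - g^2)) * g') Ω := by
      have := (Real.hasDerivAt_arccos hne1 hne2).comp Ω (inner_hasDerivAt Ω); exact this
    exact hlin.sub hA

private lemma cont_p : Continuous (fun x : ℝ => π*x/2 + Real.arccos (-(x+1) * Real.sin (π*x/2))) := by
  apply Continuous.add
  · fun_prop
  · exact Real.continuous_arccos.comp (by fun_prop)

private lemma cont_m : Continuous (fun x : ℝ => π*x/2 - Real.arccos (-(x+1) * Real.sin (π*x/2))) := by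
  apply Continuous.sub
  · fun_prop
  · exact Real.continuous_arccos.comp (by fun_prop)

private lemma val_p_neg_one :
    (fun x : ℝ => π*x/2 + Real.arccos (-(x+1) * Real.sin (π*x/2))) (-1) = 0 := by
  have h : (-((-1:ℝ)+1) * Real.sin (π*(-1)/2)) = 0 := by norm_num
  simp only [h, Real.arccos_zero]
  ring

private lemma val_p_zero :
    (fun x : ℝ => π*x/2 + Real.arccos (-(x+1) * Real.sin (π*x/2))) 0 = π/2 := by
  have h : (-((0:ℝ)+1) * Real.sin (π*0/2)) = 0 := by norm_num
  simp only [h, Real.arccos_zero]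
  ring

private lemma val_m_neg_one :
    (fun x : ℝ => π*x/2 - Real.arccos (-(x+1) * Real.sin (π*x/2))) (-1) = -π := by
  have h : (-((-1:ℝ)+1) * Real.sin (π*(-1)/2)) = 0 := by norm_num
  simp only [h, Real.arccos_zero]
  ring

private lemma val_m_zero :
    (fun x : ℝ => π*x/2 - Real.arccos (-(x+1) * Real.sin (π*x/2))) 0 = -π/2 := by
  have h : (-((0:ℝ)+1) * Real.sin (π*0/2)) = 0 := by norm_num
  simp only [h, Real.arccos_zero]
  ring

/-- Monotonicity, differentiability with positive bounded derivative, ranges and boundary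
limits of the two solution branches `ω^±(Ω) = πΩ/2 ± arccos(-(Ω+1) sin(πΩ/2))` on
`Ω ∈ (-1,0)` (case `m = 0`, odd `k`). -/
theorem stmt_8
    (ωp ωm : ℝ → ℝ)
    (hωp : ∀ Ω, ωp Ω = π*Ω/2 + Real.arccos (-(Ω+1) * Real.sin (π*Ω/2)))
    (hωm : ∀ Ω, ωm Ω = π*Ω/2 - Real.arccos (-(Ω+1) * Real.sin (π*Ω/2))) :
    StrictMonoOn ωp (Set.Ioo (-1 : ℝ) 0) ∧
    StrictMonoOn ωm (Set.Ioo (-1 : ℝ) 0) ∧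
    (∀ Ω ∈ Set.Ioo (-1 : ℝ) 0, DifferentiableAt ℝ ωp Ω ∧ 0 < deriv ωp Ω) ∧
    (∀ Ω ∈ Set.Ioo (-1 : ℝ) 0, DifferentiableAt ℝ ωm Ω ∧ 0 < deriv ωm Ω) ∧
    (∃ C : ℝ, ∀ Ω ∈ Set.Ioo (-1 : ℝ) 0, deriv ωp Ω ≤ C ∧ deriv ωm Ω ≤ C) ∧
    ωp '' (Set.Ioo (-1 : ℝ) 0) = Set.Ioo 0 (π/2) ∧
    ωm '' (Set.Ioo (-1 : ℝ) 0) = Set.Ioo (-π) (-π/2) ∧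
    Filter.Tendsto ωp (nhdsWithin (-1) (Set.Ioi (-1))) (nhds 0) ∧
    Filter.Tendsto ωp (nhdsWithin 0 (Set.Iio 0)) (nhds (π/2)) ∧
    Filter.Tendsto ωm (nhdsWithin (-1) (Set.Ioi (-1))) (nhds (-π)) ∧
    Filter.Tendsto ωm (nhdsWithin 0 (Set.Iio 0)) (nhds (-π/2)) := by
  have hp : ωp = fun x : ℝ => π*x/2 + Real.arccos (-(x+1) * Real.sin (π*x/2)) := funext hωp
  have hm : ωm = fun x : ℝ => π*x/2 - Real.arccos (-(x+1) * Real.sin (π*x/2)) := funext hωm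
  subst hp hm
  set F := fun x : ℝ => π*x/2 + Real.arccos (-(x+1) * Real.sin (π*x/2)) with hF
  set G := fun x : ℝ => π*x/2 - Real.arccos (-(x+1) * Real.sin (π*x/2)) with hG
  have hπ := Real.pi_pos
  have vp1 : F (-1) = 0 := val_p_neg_one
  have vp0 : F 0 = π/2 := val_p_zero
  have vm1 : G (-1) = -π := val_m_neg_one
  have vm0 : G 0 = -π/2 := val_m_zero
  -- derivative facts
  have hdp : ∀ Ω ∈ Set.Ioo (-1 : ℝ) 0, DifferentiableAt ℝ F Ω ∧ 0 < deriv F Ω ∧ deriv F Ω ≤ π := by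
    intro Ω hΩ
    obtain ⟨t, ht, hFp, _⟩ := master hΩ
    rw [abs_lt] at ht
    refine ⟨hFp.differentiableAt, ?_, ?_⟩ <;> rw [hFp.deriv] <;> linarith [ht.1, ht.2]
  have hdm : ∀ Ω ∈ Set.Ioo (-1 : ℝ) 0, DifferentiableAt ℝ G Ω ∧ 0 < deriv G Ω ∧ deriv G Ω ≤ π := by
    intro Ω hΩ
    obtain ⟨t, ht, _, hGm⟩ := master hΩ
    rw [abs_lt] at ht
    refine ⟨hGm.differentiableAt, ?_, ?_⟩ <;> rw [hGm.deriv] <;> linarith [ht.1, ht.2]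
  -- strict monotonicity on the closed interval
  have hsmF : StrictMonoOn F (Set.Icc (-1 : ℝ) 0) := by
    apply strictMonoOn_of_deriv_pos (convex_Icc _ _) cont_p.continuousOn
    intro x hx
    rw [interior_Icc] at hx
    exact (hdp x hx).2.1
  have hsmG : StrictMonoOn G (Set.Icc (-1 : ℝ) 0) := by
    apply strictMonoOn_of_deriv_pos (convex_Icc _ _) cont_m.continuousOn
    intro x hx
    rw [interior_Icc] at hx
    exact (hdm x hx).2.1
  have hsub : Set.Ioo (-1 : ℝ) 0 ⊆ Set.Icc (-1 : ℝ) 0 := Set.Ioo_subset_Icc_self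
  -- images
  have himF : F '' (Set.Ioo (-1 : ℝ) 0) = Set.Ioo 0 (π/2) := by
    apply Set.Subset.antisymm
    · rintro y ⟨x, hx, rfl⟩
      constructor
      · have := hsmF (Set.left_mem_Icc.mpr (by norm_num)) (hsub hx) hx.1
        rwa [vp1] at this
      · have := hsmF (hsub hx) (Set.right_mem_Icc.mpr (by norm_num)) hx.2
        rwa [vp0] at this
    · have := intermediate_value_Ioo (by norm_num : (-1:ℝ) ≤ 0) cont_p.continuousOn (f := F)
      rwa [vp1, vp0] at this
  have himG : G '' (Set.Ioo (-1 : ℝ) 0) = Set.Ioo (-π) (-π/2) := by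
    apply Set.Subset.antisymm
    · rintro y ⟨x, hx, rfl⟩
      constructor
      · have := hsmG (Set.left_mem_Icc.mpr (by norm_num)) (hsub hx) hx.1
        rwa [vm1] at this
      · have := hsmG (hsub hx) (Set.right_mem_Icc.mpr (by norm_num)) hx.2
        rwa [vm0] at this
    · have := intermediate_value_Ioo (by norm_num : (-1:ℝ) ≤ 0) cont_m.continuousOn (f := G)
      rwa [vm1, vm0] at this
  refine ⟨hsmF.mono hsub, hsmG.mono hsub,
    fun Ω hΩ => ⟨(hdp Ω hΩ).1, (hdp Ω hΩ).2.1⟩,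
    fun Ω hΩ => ⟨(hdm Ω hΩ).1, (hdm Ω hΩ).2.1⟩,
    ⟨π, fun Ω hΩ => ⟨(hdp Ω hΩ).2.2, (hdm Ω hΩ).2.2⟩⟩,
    himF, himG, ?_, ?_, ?_, ?_⟩
  · have h : Filter.Tendsto F (nhdsWithin (-1) (Set.Ioi (-1))) (nhds (F (-1))) :=
      (cont_p.tendsto (-1)).mono_left nhdsWithin_le_nhds
    rwa [vp1] at h
  · have h : Filter.Tendsto F (nhdsWithin 0 (Set.Iio 0)) (nhds (F 0)) :=
      (cont_p.tendsto 0).mono_left nhdsWithin_le_nhds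
    rwa [vp0] at h
  · have h : Filter.Tendsto G (nhdsWithin (-1) (Set.Ioi (-1))) (nhds (G (-1))) :=
      (cont_m.tendsto (-1)).mono_left nhdsWithin_le_nhds
    rwa [vm1] at h
  · have h : Filter.Tendsto G (nhdsWithin 0 (Set.Iio 0)) (nhds (G 0)) :=
      (cont_m.tendsto 0).mono_left nhdsWithin_le_nhds
    rwa [vm0] at h
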